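/- Let R be a finite-dimensional associative real algebra with identity, equipped with an involution γ (an ℝ-linear anti-automorphism with γ∘γ = id; a star ring and star module structure over ℝ with γ = star) such that γ(a)·a = a·γ(a) ∈ ℝ·1 for all a ∈ R. Let C ∈ R[t] be monic and let M ∈ ℝ[t] be a monic quadratic polynomial dividing the norm polynomial ν(C) = C·γ(C). If S := lrem(C, M) satisfies ν(S) = S·γ(S) ≠ 0, then S has a unique right zero h ∈ R, and t − h is a right factor of C, i.e. C = Q·(t − h) for some Q ∈ R[t]. -/

import Mathlib

open Polynomial

/-- Coefficientwise application of the involution `star` to a left polynomial. -/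
noncomputable def pconj {R : Type*} [Ring R] [StarRing R] (p : Polynomial R) : Polynomial R :=
  ⟨AddMonoidAlgebra.ofCoeff (Finsupp.mapRange star (star_zero R) p.toFinsupp.coeff)⟩

section pconjLemmas
variable {R : Type*} [Ring R] [StarRing R]

lemma pconj_coeff (p : Polynomial R) (n : ℕ) : (pconj p).coeff n = star (p.coeff n) := rfl

lemma pconj_add (p q : Polynomial R) : pconj (p + q) = pconj p + pconj q := by
  ext n; simp [pconj_coeff, coeff_add]

lemma pconj_mul (p q : Polynomial R) : pconj (p * q) = pconj q * pconj p := by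
  ext n
  rw [pconj_coeff, coeff_mul, coeff_mul, ← Finset.HasAntidiagonal.map_swap_antidiagonal, Finset.sum_map]
  simp [pconj_coeff, star_sum, star_mul]

lemma pconj_C (a : R) : pconj (C a) = C (star a) := by
  ext n; simp [pconj_coeff, coeff_C, apply_ite star]

end pconjLemmas

section alg
variable {R : Type*} [Ring R] [Algebra ℝ R] [StarRing R] [StarModule ℝ R]

lemma pconj_map_real (M : Polynomial ℝ) :
    pconj (M.map (algebraMap ℝ R)) = M.map (algebraMap ℝ R) := by
  ext n
  rw [pconj_coeff, coeff_map, ← algebraMap_star_comm, star_trivial]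

omit [StarRing R] [StarModule ℝ R] in
lemma map_real_comm (M : Polynomial ℝ) (p : Polynomial R) :
    M.map (algebraMap ℝ R) * p = p * M.map (algebraMap ℝ R) := by
  ext n
  rw [coeff_mul, coeff_mul]
  conv_lhs => rw [← Finset.HasAntidiagonal.map_swap_antidiagonal, Finset.sum_map]
  refine Finset.sum_congr rfl fun x _ => ?_
  simp only [Function.Embedding.coeFn_mk, Prod.fst_swap, Prod.snd_swap, coeff_map]
  exact (Algebra.commutes _ _)

omit [StarRing R] [StarModule ℝ R] in
lemma C_alg_comm (r : ℝ) (p : Polynomial R) :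
    C (algebraMap ℝ R r) * p = p * C (algebraMap ℝ R r) := by
  ext n; simp [coeff_C_mul, coeff_mul_C, Algebra.commutes]

end alg

section expand
variable {R : Type*} [Ring R]

lemma expand_lin (u v w z : R) : (C u * X + C v) * (C w * X + C z)
    = C (u * w) * X ^ 2 + C (u * z + v * w) * X + C (v * z) := by
  have h1 : (X : Polynomial R) * C w = C w * X := (X_mul (p := C w))
  have h2 : (X : Polynomial R) * C z = C z * X := (X_mul (p := C z))
  calc (C u * X + C v) * (C w * X + C z)
      = C u * (X * C w) * X + C u * (X * C z) + (C v * C w * X + C v * C z) := by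
        noncomm_ring
    _ = C (u * w) * X ^ 2 + C (u * z + v * w) * X + C (v * z) := by
        rw [h1, h2]
        simp only [C_mul, C_add]
        noncomm_ring

end expand

/-- If `M` is a monic quadratic real factor of the norm polynomial `ν(F) = F · γ(F)` and the
left remainder `S = lrem(F, M)` has nonzero norm, then `S` has a unique right zero `h` and
`t - h` is a right factor of `F`. -/
theorem lemma_right_factor_from_quadratic_factor {R : Type*} [Ring R] [Algebra ℝ R]
    [FiniteDimensional ℝ R] [StarRing R] [StarModule ℝ R]
    (hcomm : ∀ a : R, star a * a = a * star a)
    (hreal : ∀ a : R, ∃ r : ℝ, star a * a = algebraMap ℝ R r)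
    (F Q S : Polynomial R) (M : Polynomial ℝ)
    (hF : F.Monic) (hM : M.Monic) (hMdeg : M.degree = 2)
    (hdvd : M.map (algebraMap ℝ R) ∣ F * pconj F)
    (hrem : F = Q * M.map (algebraMap ℝ R) + S) (hSdeg : S.degree < 2)
    (hnu : S * pconj S ≠ 0) :
    (∃! h : R, S.eval h = 0) ∧
      ∀ h : R, S.eval h = 0 → ∃ Q' : Polynomial R, F = Q' * (X - Polynomial.C h) := by
  classical
  have hnt : Nontrivial R := by
    by_contra hn
    rw [not_nontrivial_iff_subsingleton] at hn
    exact hnu (Subsingleton.elim _ _)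
  set Mh : Polynomial R := M.map (algebraMap ℝ R) with hMhdef
  have hMhm : Mh.Monic := hM.map _
  have hMhdeg : Mh.degree = 2 := by
    rw [hMhdef, degree_map_eq_of_leadingCoeff_ne_zero _ (by simp [hM.leadingCoeff]), hMdeg]
  have hMhnat : Mh.natDegree = 2 := natDegree_eq_of_degree_eq_some hMhdeg
  -- degree-1 representation of S
  have hS1 : S.degree ≤ 1 := by
    refine degree_le_iff_coeff_zero S 1 |>.mpr fun m hm => ?_
    refine coeff_eq_zero_of_degree_lt (lt_of_lt_of_le hSdeg ?_)
    have : (2 : ℕ) ≤ m := by exact_mod_cast Nat.succ_le_of_lt (by exact_mod_cast hm)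
    exact_mod_cast this
  set a : R := S.coeff 0 with ha
  set b : R := S.coeff 1 with hb
  have hSrep : S = C b * X + C a := eq_X_add_C_of_degree_le_one hS1
  have hpSrep : pconj S = C (star b) * X + C (star a) := by
    rw [hSrep, pconj_add, pconj_mul, pconj_C, pconj_C]
    have : pconj (X : Polynomial R) = X := by
      ext n; simp [pconj_coeff, coeff_X, apply_ite star]
    rw [this, X_mul]
  -- conjugate of F
  have hpF : pconj F = Mh * pconj Q + pconj S := by
    rw [hrem, pconj_add, pconj_mul, pconj_map_real]
  -- M divides the norm of S
  obtain ⟨W, hW⟩ := hdvd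
  have hcQ : Mh * Q = Q * Mh := map_real_comm M Q
  have hcS : Mh * S = S * Mh := map_real_comm M S
  have key : F * pconj F
      = Mh * (Q * (Mh * pconj Q)) + Mh * (Q * pconj S) + Mh * (S * pconj Q) + S * pconj S := by
    rw [hpF, hrem, ← mul_assoc Mh Q, ← mul_assoc Mh Q, ← mul_assoc Mh S, hcQ, hcS]
    noncomm_ring
  set D : Polynomial R := W - (Q * (Mh * pconj Q) + Q * pconj S + S * pconj Q) with hD
  have hSS : S * pconj S = Mh * D := by
    rw [hD, mul_sub, ← hW, key, mul_add, mul_add]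
    abel
  -- D is a nonzero constant
  have hDne : D ≠ 0 := fun h0 => hnu (by rw [hSS, h0, mul_zero])
  have hpS1 : (pconj S).degree ≤ 1 := by rw [hpSrep]; exact degree_linear_le
  have hDnat : D.natDegree = 0 := by
    have h1 : (Mh * D).natDegree = 2 + D.natDegree := by
      rw [hMhm.natDegree_mul' hDne, hMhnat]
    have h2 : (S * pconj S).natDegree ≤ 2 := by
      refine le_trans natDegree_mul_le ?_
      have e1 : S.natDegree ≤ 1 := natDegree_le_iff_degree_le.mpr hS1
      have e2 : (pconj S).natDegree ≤ 1 := natDegree_le_iff_degree_le.mpr hpS1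
      omega
    rw [hSS, h1] at h2
    omega
  set d : R := D.coeff 0 with hd
  have hDC : D = C d := eq_C_of_natDegree_eq_zero hDnat
  have hdne : d ≠ 0 := by rintro h; rw [hDC, h, map_zero] at hDne; exact hDne rfl
  have hSSd : S * pconj S = Mh * C d := by rw [hSS, hDC]
  -- coefficient 2 : b * star b = d
  have hprod : S * pconj S
      = C (b * star b) * X ^ 2 + C (b * star a + a * star b) * X + C (a * star a) := by
    rw [hpSrep, hSrep, expand_lin]
  have hcoeff2 : b * star b = d := by
    have h1 : (S * pconj S).coeff 2 = b * star b := by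
      rw [hprod]
      simp only [coeff_add, coeff_C_mul, coeff_X_pow, coeff_X, coeff_C]
      norm_num
    have h2 : (Mh * C d).coeff 2 = d := by
      rw [coeff_mul_C, ← hMhnat, hMhm.coeff_natDegree, one_mul]
    rw [hSSd, h2] at h1; exact h1.symm
  -- d is a nonzero real scalar
  obtain ⟨r, hr⟩ := hreal b
  have hdr : d = algebraMap ℝ R r := by rw [← hcoeff2, ← hcomm b, hr]
  have hrne : r ≠ 0 := by rintro rfl; rw [map_zero] at hdr; exact hdne hdr
  -- inverse of b
  set b' : R := algebraMap ℝ R r⁻¹ * star b with hb'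
  have hb'b : b' * b = 1 := by
    rw [hb', mul_assoc, hr, ← map_mul, inv_mul_cancel₀ hrne, map_one]
  have hbb' : b * b' = 1 := by
    have : b * b' = algebraMap ℝ R r⁻¹ * (b * star b) := by
      rw [hb', ← mul_assoc, ← Algebra.commutes r⁻¹ b, mul_assoc]
    rw [this, ← hcomm b, hr, ← map_mul, inv_mul_cancel₀ hrne, map_one]
  -- evaluation of S
  have heval : ∀ x : R, S.eval x = b * x + a := by
    intro x
    rw [hSrep]
    simp [eval_add, eval_C, eval_C_mul]
  constructor
  · refine ⟨-(b' * a), ?_, ?_⟩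
    · show S.eval (-(b' * a)) = 0
      rw [heval, mul_neg, ← mul_assoc, hbb', one_mul, neg_add_cancel]
    · intro y hy
      have hy' : b * y + a = 0 := by rw [← heval]; exact hy
      have hby : b * y = -a := eq_neg_of_add_eq_zero_left hy'
      calc y = b' * (b * y) := by rw [← mul_assoc, hb'b, one_mul]
        _ = -(b' * a) := by rw [hby, mul_neg]
  · intro h hh
    rw [heval] at hh
    have hbh : b * h = -a := by
      have := congrArg (fun z => z - a) hh
      simpa [add_sub_cancel_right] using this
    -- S = C b * (X - C h)
    have hfacS : S = C b * (X - C h) := by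
      rw [hSrep, mul_sub, ← C_mul, hbh, map_neg, sub_neg_eq_add]
    -- cross identity : pconj S * S = S * pconj S
    have hcross : star b * a + star a * b = b * star a + a * star b := by
      have e1 : star (a + b) * (a + b) = a * star a + (star a * b + star b * a) + b * star b := by
        rw [star_add, add_mul, mul_add, mul_add, hcomm a, hcomm b]; abel
      have e2 : (a + b) * star (a + b) = a * star a + (a * star b + b * star a) + b * star b := by
        rw [star_add, mul_add, add_mul, add_mul]; abel
      have h3 := hcomm (a + b)
      rw [e1, e2] at h3
      have h4 := add_right_cancel h3
      have h5 := add_left_cancel h4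
      rw [add_comm (star b * a), h5]; abel
    have hpSS : pconj S * S = Mh * C d := by
      rw [← hSSd, hpSrep, hSrep, expand_lin, expand_lin, hcomm a, hcomm b, hcross]
    -- Mh = (stuff) * (X - C h)
    have hMfac : Mh = C (algebraMap ℝ R r⁻¹) * pconj S * C b * (X - C h) := by
      have h1 : Mh * C d * C (algebraMap ℝ R r⁻¹) = Mh := by
        rw [mul_assoc, ← C_mul, hdr, ← map_mul, mul_inv_cancel₀ hrne, map_one, C_1, mul_one]
      calc Mh = Mh * C d * C (algebraMap ℝ R r⁻¹) := h1.symm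
        _ = C (algebraMap ℝ R r⁻¹) * (pconj S * S) := by rw [← hpSS, C_alg_comm]
        _ = C (algebraMap ℝ R r⁻¹) * pconj S * C b * (X - C h) := by
            nth_rewrite 2 [hfacS]
            noncomm_ring
    refine ⟨Q * (C (algebraMap ℝ R r⁻¹) * pconj S * C b) + C b, ?_⟩
    rw [hrem, hMfac, hfacS]
    noncomm_ring
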